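/- arXiv:1906.12144 — 2 statements merged into one kernel-verified Lean document; each statement's English description precedes it below -/
import Mathlib

section
/- Let G be a chordal graph with a simplicial vertex x_1 whose closed neighborhood N[x_1] = {x_1, …, x_r} induces a clique with r ≥ 2. For each i = 1, …, r let G_i = G \ N[x_i] and y_i = ∏_{x_j ∈ N(x_i)} x_j. If for each i, u^i_1, …, u^i_{s_i} is a linear quotients ordering for J(G_i), then the concatenated sequence y_1u^1_1, …, y_1u^1_{s_1}, y_2u^2_1, …, y_2u^2_{s_2}, …, y_ru^r_1, …, y_ru^r_{s_r} is a linear quotients ordering for J(G). (If G_i has no edges, the corresponding block is just y_i.) -/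
open Finset

variable {V : Type} [Fintype V] [DecidableEq V]

/-- The closed neighborhood `N[v]` of a vertex, as a `Finset`. -/
def closedNbhd (G : SimpleGraph V) [DecidableRel G.Adj] (v : V) : Finset V :=
  insert v (G.neighborFinset v)

/-- The graph `G \ A` obtained by deleting the vertices in `A` (keeping them as
isolated vertices on the same vertex set). -/
def deleteVerts (G : SimpleGraph V) (A : Finset V) : SimpleGraph V where
  Adj u v := G.Adj u v ∧ u ∉ A ∧ v ∉ A
  symm := ⟨fun u v h => ⟨h.1.symm, h.2.2, h.2.1⟩⟩
  loopless := ⟨fun u h => G.loopless.irrefl u h.1⟩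

/-- `C` is a vertex cover of `G`. -/
def IsVertexCover (G : SimpleGraph V) (C : Finset V) : Prop :=
  ∀ ⦃u v : V⦄, G.Adj u v → u ∈ C ∨ v ∈ C

/-- `C` is a minimal vertex cover of `G`. -/
def IsMinVertexCover (G : SimpleGraph V) (C : Finset V) : Prop :=
  IsVertexCover G C ∧ ∀ D : Finset V, D ⊂ C → ¬ IsVertexCover G D

/-- A graph is chordal if it has no induced cycle of length greater than `3`. -/
def IsChordal (G : SimpleGraph V) : Prop :=
  ∀ n : ℕ, 4 ≤ n → ∀ f : ZMod n → V, Function.Injective f →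
    ¬ (∀ i j : ZMod n, G.Adj (f i) (f j) ↔ j = i + 1 ∨ i = j + 1)

/-- `S` is an independent set of `G`. -/
def IsIndepSet (G : SimpleGraph V) (S : Finset V) : Prop :=
  ∀ ⦃u : V⦄, u ∈ S → ∀ ⦃v : V⦄, v ∈ S → ¬ G.Adj u v

/-- `S` is a maximal independent set of `G`. -/
def IsMaxIndepSet (G : SimpleGraph V) (S : Finset V) : Prop :=
  IsIndepSet G S ∧ ∀ T : Finset V, IsIndepSet G T → S ⊆ T → S = T

/-- `F` is a maximal clique of `G`, i.e. a facet of the clique complex `Δ(G)`. -/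
def IsMaxCliqueF (G : SimpleGraph V) (F : Finset V) : Prop :=
  G.IsClique ↑F ∧ ∀ F' : Finset V, G.IsClique ↑F' → F ⊆ F' → F = F'

/-- `M` is an induced matching of `G`: a set of edges of `G` such that no edge of `G`
joins a vertex of one member to a vertex of a different member. -/
def IsInducedMatching (G : SimpleGraph V) (M : Finset (Sym2 V)) : Prop :=
  (∀ e ∈ M, e ∈ G.edgeSet) ∧
    ∀ e ∈ M, ∀ f ∈ M, e ≠ f → ∀ u v : V, u ∈ e → v ∈ f → ¬ G.Adj u v

/-- The induced matching number `im(G)`. -/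
noncomputable def inducedMatchingNumber (G : SimpleGraph V) : ℕ :=
  sSup {n | ∃ M : Finset (Sym2 V), IsInducedMatching G M ∧ M.card = n}

/-- The graph `G` has no edges. -/
def NoEdges (G : SimpleGraph V) : Prop := ∀ u v : V, ¬ G.Adj u v

open MvPolynomial in
/-- The squarefree monomial `∏_{v ∈ C} x_v` associated to a set of vertices. -/
noncomputable def coverMonomial (K : Type) [Field K] (C : Finset V) : MvPolynomial V K :=
  ∏ v ∈ C, X v

open MvPolynomial in
/-- The cover ideal `J(G)`, generated by the monomials of the minimal vertex covers. -/
noncomputable def coverIdeal (K : Type) [Field K] (G : SimpleGraph V) : Ideal (MvPolynomial V K) :=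
  Ideal.span {m | ∃ C : Finset V, IsMinVertexCover G C ∧ m = coverMonomial K C}

open MvPolynomial in
/-- The edge ideal `I(G)`. -/
noncomputable def edgeIdeal (K : Type) [Field K] (G : SimpleGraph V) : Ideal (MvPolynomial V K) :=
  Ideal.span {m | ∃ u v : V, G.Adj u v ∧ m = X u * X v}

open MvPolynomial in
/-- `m` is a linear quotients ordering: each successive colon ideal
`(m_1, …, m_{i-1}) : m_i` is generated by a subset of the variables. -/
def IsLinQuotOrd {K : Type} [Field K] {ι : Type} [LinearOrder ι]
    (m : ι → MvPolynomial V K) : Prop :=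
  ∀ i : ι, ∃ T : Set V,
    (Ideal.span (m '' {j | j < i})).colon (Ideal.span {m i}) =
      Ideal.span ((fun v => (X v : MvPolynomial V K)) '' T)

/-! ### Auxiliary lemmas -/

noncomputable def indF (C : Finset V) : V →₀ ℕ := ∑ v ∈ C, Finsupp.single v 1

lemma indF_apply (C : Finset V) (w : V) : indF C w = if w ∈ C then 1 else 0 := by
  classical
  simp only [indF, Finset.sum_apply', Finsupp.single_apply]
  rw [Finset.sum_ite_eq' C w (fun _ => 1)]

lemma indF_le_iff {C : Finset V} {f : V →₀ ℕ} : indF C ≤ f ↔ ∀ w ∈ C, 1 ≤ f w := by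
  constructor
  · intro h w hw
    have := h w
    rwa [indF_apply, if_pos hw] at this
  · intro h w
    rw [indF_apply]
    split_ifs with hw
    · exact h w hw
    · exact Nat.zero_le _

lemma indF_subset_iff {C D : Finset V} : indF C ≤ indF D ↔ C ⊆ D := by
  rw [indF_le_iff]
  constructor
  · intro h w hw
    have := h w hw
    rw [indF_apply] at this
    by_contra hc; simp [hc] at this
  · intro h w hw
    rw [indF_apply, if_pos (h hw)]

lemma indF_le_single_add_iff {C D : Finset V} {v : V} :
    indF C ≤ Finsupp.single v 1 + indF D ↔ C ⊆ insert v D := by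
  rw [indF_le_iff]
  constructor
  · intro h w hw
    rcases eq_or_ne w v with rfl | hne
    · exact Finset.mem_insert_self _ _
    · have := h w hw
      rw [Finsupp.add_apply, Finsupp.single_apply, if_neg (fun h' => hne h'.symm),
        indF_apply] at this
      simp only [zero_add] at this
      split_ifs at this with hD
      · exact Finset.mem_insert_of_mem hD
      · omega
  · intro h w hw
    rcases Finset.mem_insert.mp (h hw) with rfl | hD
    · rw [Finsupp.add_apply, Finsupp.single_eq_same]
      omega
    · rw [Finsupp.add_apply, indF_apply, if_pos hD]
      omega

open MvPolynomial in
lemma coverMonomial_eq (K : Type) [Field K] (C : Finset V) :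
    coverMonomial K C = monomial (indF C) (1 : K) := by
  classical
  induction C using Finset.induction with
  | empty => simp [coverMonomial, indF]
  | insert a s' h ih =>
    rw [coverMonomial, Finset.prod_insert h, ← coverMonomial, ih]
    rw [X, monomial_mul, one_mul]
    congr 1
    rw [indF, indF, Finset.sum_insert h]

lemma exists_min_subcover (G : SimpleGraph V) :
    ∀ W : Finset V, IsVertexCover G W → ∃ D, D ⊆ W ∧ IsMinVertexCover G D := by
  intro W
  induction W using Finset.strongInductionOn with
  | _ W ih =>
    intro hW
    by_cases hmin : ∀ D : Finset V, D ⊂ W → ¬ IsVertexCover G D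
    · exact ⟨W, Finset.Subset.refl W, hW, hmin⟩
    · push_neg at hmin
      obtain ⟨D, hD, hDc⟩ := hmin
      obtain ⟨D', hD', hD'min⟩ := ih D hD hDc
      exact ⟨D', hD'.trans hD.subset, hD'min⟩

omit [Fintype V] in
lemma min_cover_incomp {G : SimpleGraph V} {A B : Finset V} (hA : IsMinVertexCover G A)
    (hB : IsMinVertexCover G B) (hAB : A ⊆ B) : A = B := by
  by_contra h
  exact hB.2 A (lt_of_le_of_ne hAB h) hA.1

omit [Fintype V] in
lemma min_cover_not_isolated {G : SimpleGraph V} {A : Finset V} (hA : IsMinVertexCover G A)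
    {v : V} (hv : ∀ u, ¬ G.Adj v u) : v ∉ A := by
  intro hvA
  refine hA.2 (A.erase v) (Finset.erase_ssubset hvA) ?_
  intro a b hab
  rcases hA.1 hab with h | h
  · left
    refine Finset.mem_erase.mpr ⟨?_, h⟩
    rintro rfl; exact hv b hab
  · right
    refine Finset.mem_erase.mpr ⟨?_, h⟩
    rintro rfl; exact hv a hab.symm

open MvPolynomial in
/-- Van Tuyl–Villarreal: concatenating linear quotients orderings of the `J(G_i)`,
multiplied by the monomials `y_i` of the neighborhoods, gives a linear quotients
ordering of `J(G)`. -/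
theorem stmt_6 (K : Type) [Field K] {V : Type} [Fintype V] [LinearOrder V]
    (G : SimpleGraph V) [DecidableRel G.Adj] (hG : IsChordal G)
    (r : ℕ) (hr : 2 ≤ r) (x : Fin r → V) (hx : Function.Injective x)
    (hN : closedNbhd G (x ⟨0, by omega⟩) = Finset.image x Finset.univ)
    (hcl : G.IsClique (closedNbhd G (x ⟨0, by omega⟩) : Set V))
    (s : Fin r → ℕ) (C : ∀ t : Fin r, Fin (s t) → Finset V)
    (hCinj : ∀ t, Function.Injective (C t))
    (hCenum : ∀ t, ∀ D : Finset V,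
      IsMinVertexCover (deleteVerts G (closedNbhd G (x t))) D ↔ ∃ i, C t i = D)
    (hLQ : ∀ t, IsLinQuotOrd (fun i => coverMonomial K (C t i))) :
    Ideal.span (Set.range (fun p : Lex (Σ t : Fin r, Fin (s t)) =>
        coverMonomial K (G.neighborFinset (x (ofLex p).1)) *
          coverMonomial K (C (ofLex p).1 (ofLex p).2))) = coverIdeal K G ∧
    IsLinQuotOrd (fun p : Lex (Σ t : Fin r, Fin (s t)) =>
      coverMonomial K (G.neighborFinset (x (ofLex p).1)) *
        coverMonomial K (C (ofLex p).1 (ofLex p).2)) := by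
  classical
  set t0 : Fin r := ⟨0, by omega⟩ with ht0
  -- basic adjacency facts about the clique
  have hmemN : ∀ t : Fin r, x t ∈ closedNbhd G (x t0) := by
    intro t
    rw [hN]
    exact Finset.mem_image_of_mem x (Finset.mem_univ t)
  have hadj : ∀ t t' : Fin r, t ≠ t' → G.Adj (x t) (x t') := by
    intro t t' hne
    exact hcl (hmemN t) (hmemN t') (fun h => hne (hx h))
  have hnbr0 : ∀ v : V, G.Adj (x t0) v → ∃ j : Fin r, j ≠ t0 ∧ v = x j := by
    intro v hv
    have hvmem : v ∈ closedNbhd G (x t0) := by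
      unfold closedNbhd
      exact Finset.mem_insert_of_mem ((G.mem_neighborFinset _ _).mpr hv)
    rw [hN] at hvmem
    obtain ⟨j, _, rfl⟩ := Finset.mem_image.mp hvmem
    refine ⟨j, ?_, rfl⟩
    rintro rfl
    exact G.loopless.irrefl _ hv
  -- the covers of `G` indexed by pairs
  set A : (Σ t : Fin r, Fin (s t)) → Finset V :=
    fun p => G.neighborFinset (x p.1) ∪ C p.1 p.2 with hA
  have hCmin : ∀ t i, IsMinVertexCover (deleteVerts G (closedNbhd G (x t))) (C t i) :=
    fun t i => (hCenum t (C t i)).mpr ⟨i, rfl⟩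
  have hdisj : ∀ (t : Fin r) (i : Fin (s t)) ⦃w : V⦄, w ∈ C t i →
      w ∉ closedNbhd G (x t) := by
    intro t i w hw hwN
    have : w ∉ C t i := by
      refine min_cover_not_isolated (hCmin t i) ?_
      intro u hu
      exact hu.2.1 hwN
    exact this hw
  have hxtnotA : ∀ (t : Fin r) (i : Fin (s t)), x t ∉ A ⟨t, i⟩ := by
    intro t i hmem
    rcases Finset.mem_union.mp hmem with h | h
    · exact G.loopless.irrefl _ ((G.mem_neighborFinset _ _).mp h)
    · exact hdisj t i h (Finset.mem_insert_self _ _)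
  have hxt'A : ∀ (t t' : Fin r) (i : Fin (s t)), t' ≠ t → x t' ∈ A ⟨t, i⟩ := by
    intro t t' i hne
    exact Finset.mem_union_left _ ((G.mem_neighborFinset _ _).mpr (hadj t t' hne.symm))
  have hclosed : ∀ t : Fin r, closedNbhd G (x t) = insert (x t) (G.neighborFinset (x t)) :=
    fun t => rfl
  have hAinj : Function.Injective A := by
    rintro ⟨t, i⟩ ⟨t', i'⟩ h
    rcases eq_or_ne t t' with rfl | hne
    · have hCC : C t i = C t i' := by
        apply Finset.Subset.antisymm <;> intro w hw
        · have hw2 : w ∈ A ⟨t, i'⟩ := h ▸ Finset.mem_union_right _ hw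
          rcases Finset.mem_union.mp hw2 with h' | h'
          · exact absurd (Finset.mem_insert_of_mem h') (hdisj t i hw)
          · exact h'
        · have hw2 : w ∈ A ⟨t, i⟩ := h ▸ Finset.mem_union_right _ hw
          rcases Finset.mem_union.mp hw2 with h' | h'
          · exact absurd (Finset.mem_insert_of_mem h') (hdisj t i' hw)
          · exact h'
      exact congrArg (Sigma.mk t) (hCinj t hCC)
    · exact absurd (h ▸ hxt'A t t' i (Ne.symm hne)) (hxtnotA t' i')
  have hAmin : ∀ p, IsMinVertexCover G (A p) := by
    rintro ⟨t, i⟩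
    constructor
    · intro u v huv
      by_cases hut : u = x t
      · subst hut
        exact Or.inr (Finset.mem_union_left _ ((G.mem_neighborFinset _ _).mpr huv))
      by_cases hvt : v = x t
      · subst hvt
        exact Or.inl (Finset.mem_union_left _ ((G.mem_neighborFinset _ _).mpr huv.symm))
      by_cases huN : u ∈ G.neighborFinset (x t)
      · exact Or.inl (Finset.mem_union_left _ huN)
      by_cases hvN : v ∈ G.neighborFinset (x t)
      · exact Or.inr (Finset.mem_union_left _ hvN)
      have hu' : u ∉ closedNbhd G (x t) := by
        rw [hclosed]; simp [hut, huN]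
      have hv' : v ∉ closedNbhd G (x t) := by
        rw [hclosed]; simp [hvt, hvN]
      rcases (hCmin t i).1 (show (deleteVerts G (closedNbhd G (x t))).Adj u v from
        ⟨huv, hu', hv'⟩) with h | h
      · exact Or.inl (Finset.mem_union_right _ h)
      · exact Or.inr (Finset.mem_union_right _ h)
    · intro D hD hDcov
      have hxtD : x t ∉ D := fun hmem => hxtnotA t i (hD.subset hmem)
      have hND : G.neighborFinset (x t) ⊆ D := by
        intro v hv
        rcases hDcov ((G.mem_neighborFinset _ _).mp hv) with h | h
        · exact absurd h hxtD
        · exact h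
      have hD''sub : D \ G.neighborFinset (x t) ⊆ C t i := by
        intro w hw
        obtain ⟨hwD, hwN⟩ := Finset.mem_sdiff.mp hw
        rcases Finset.mem_union.mp (hD.subset hwD) with h | h
        · exact absurd h hwN
        · exact h
      have hD''ne : D \ G.neighborFinset (x t) ≠ C t i := by
        obtain ⟨w, hwA, hwD⟩ := Finset.exists_of_ssubset hD
        rcases Finset.mem_union.mp hwA with h | h
        · exact absurd (hND h) hwD
        · intro heq
          have : w ∈ D \ G.neighborFinset (x t) := heq ▸ h
          exact hwD (Finset.mem_sdiff.mp this).1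
      refine (hCmin t i).2 (D \ G.neighborFinset (x t))
        (lt_of_le_of_ne hD''sub hD''ne) ?_
      intro u v huv
      obtain ⟨huv', hu', hv'⟩ := huv
      have hnb : ∀ w : V, w ∉ closedNbhd G (x t) → w ∉ G.neighborFinset (x t) := by
        intro w hw hw'
        exact hw (Finset.mem_insert_of_mem hw')
      rcases hDcov huv' with h | h
      · exact Or.inl (Finset.mem_sdiff.mpr ⟨h, hnb u hu'⟩)
      · exact Or.inr (Finset.mem_sdiff.mpr ⟨h, hnb v hv'⟩)
  have hAchar : ∀ D : Finset V, IsMinVertexCover G D → ∃ p, A p = D := by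
    intro D hD
    have hex : ∃ t : Fin r, x t ∉ D := by
      by_contra hall
      push_neg at hall
      refine hD.2 (D.erase (x t0)) (Finset.erase_ssubset (hall t0)) ?_
      intro u v huv
      have key : ∀ a b : V, G.Adj a b → a = x t0 → b ∈ D.erase (x t0) := by
        intro a b hab ha
        subst ha
        obtain ⟨j, hj, rfl⟩ := hnbr0 b hab
        exact Finset.mem_erase.mpr ⟨fun h => hj (hx h), hall j⟩
      rcases hD.1 huv with h | h
      · by_cases hu0 : u = x t0
        · exact Or.inr (key u v huv hu0)
        · exact Or.inl (Finset.mem_erase.mpr ⟨hu0, h⟩)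
      · by_cases hv0 : v = x t0
        · exact Or.inl (key v u huv.symm hv0)
        · exact Or.inr (Finset.mem_erase.mpr ⟨hv0, h⟩)
    obtain ⟨t, hxt⟩ := hex
    have hND : G.neighborFinset (x t) ⊆ D := by
      intro v hv
      rcases hD.1 ((G.mem_neighborFinset _ _).mp hv) with h | h
      · exact absurd h hxt
      · exact h
    have hnb : ∀ w : V, w ∉ closedNbhd G (x t) → w ∉ G.neighborFinset (x t) := by
      intro w hw hw'
      exact hw (Finset.mem_insert_of_mem hw')
    have hD''cov : IsVertexCover (deleteVerts G (closedNbhd G (x t)))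
        (D \ G.neighborFinset (x t)) := by
      intro u v huv
      obtain ⟨huv', hu', hv'⟩ := huv
      rcases hD.1 huv' with h | h
      · exact Or.inl (Finset.mem_sdiff.mpr ⟨h, hnb u hu'⟩)
      · exact Or.inr (Finset.mem_sdiff.mpr ⟨h, hnb v hv'⟩)
    have hD''min : IsMinVertexCover (deleteVerts G (closedNbhd G (x t)))
        (D \ G.neighborFinset (x t)) := by
      refine ⟨hD''cov, ?_⟩
      intro E hE hEcov
      have hcov : IsVertexCover G (G.neighborFinset (x t) ∪ E) := by
        intro u v huv
        by_cases hut : u = x t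
        · subst hut
          exact Or.inr (Finset.mem_union_left _ ((G.mem_neighborFinset _ _).mpr huv))
        by_cases hvt : v = x t
        · subst hvt
          exact Or.inl (Finset.mem_union_left _ ((G.mem_neighborFinset _ _).mpr huv.symm))
        by_cases huN : u ∈ G.neighborFinset (x t)
        · exact Or.inl (Finset.mem_union_left _ huN)
        by_cases hvN : v ∈ G.neighborFinset (x t)
        · exact Or.inr (Finset.mem_union_left _ hvN)
        have hu' : u ∉ closedNbhd G (x t) := by
          rw [hclosed]; simp [hut, huN]
        have hv' : v ∉ closedNbhd G (x t) := by
          rw [hclosed]; simp [hvt, hvN]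
        rcases hEcov (show (deleteVerts G (closedNbhd G (x t))).Adj u v from
          ⟨huv, hu', hv'⟩) with h | h
        · exact Or.inl (Finset.mem_union_right _ h)
        · exact Or.inr (Finset.mem_union_right _ h)
      refine hD.2 (G.neighborFinset (x t) ∪ E) ?_ hcov
      have hsub : G.neighborFinset (x t) ∪ E ⊆ D :=
        Finset.union_subset hND ((hE.subset).trans (Finset.sdiff_subset))
      refine lt_of_le_of_ne hsub ?_
      obtain ⟨w, hwD'', hwE⟩ := Finset.exists_of_ssubset hE
      obtain ⟨hwD, hwN⟩ := Finset.mem_sdiff.mp hwD''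
      intro heq
      have : w ∈ G.neighborFinset (x t) ∪ E := heq ▸ hwD
      rcases Finset.mem_union.mp this with h | h
      · exact hwN h
      · exact hwE h
    obtain ⟨i, hi⟩ := (hCenum t _).mp hD''min
    refine ⟨⟨t, i⟩, ?_⟩
    show G.neighborFinset (x t) ∪ C t i = D
    rw [hi]
    apply Finset.Subset.antisymm
    · exact Finset.union_subset hND Finset.sdiff_subset
    · intro w hw
      by_cases hwN : w ∈ G.neighborFinset (x t)
      · exact Finset.mem_union_left _ hwN
      · exact Finset.mem_union_right _ (Finset.mem_sdiff.mpr ⟨hw, hwN⟩)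
  have hsmall : ∀ (t : Fin r) (i i' : Fin (s t)), i' < i →
      ∃ v, v ∈ C t i' ∧ v ∉ C t i ∧ ∃ j, j < i ∧ C t j ⊆ insert v (C t i) := by
    intro t i i' hii
    obtain ⟨T, hT⟩ := hLQ t i
    have h1 : coverMonomial K (C t i') ∈
        (Ideal.span ((fun j => coverMonomial K (C t j)) '' {j | j < i})).colon
          (Ideal.span {coverMonomial K (C t i)}) := by
      rw [Ideal.mem_colon_span_singleton]
      exact Ideal.mul_mem_right _ _ (Ideal.subset_span ⟨i', hii, rfl⟩)
    rw [hT] at h1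
    have hsupp : (coverMonomial K (C t i')).support = {indF (C t i')} := by
      rw [coverMonomial_eq, MvPolynomial.support_monomial]
      simp
    obtain ⟨v, hvT, hv⟩ := MvPolynomial.mem_ideal_span_X_image.mp h1 (indF (C t i'))
      (by rw [hsupp]; exact Finset.mem_singleton_self _)
    have hvCi' : v ∈ C t i' := by
      by_contra hc
      rw [indF_apply, if_neg hc] at hv
      exact hv rfl
    have h2 : (X v : MvPolynomial V K) ∈
        (Ideal.span ((fun j => coverMonomial K (C t j)) '' {j | j < i})).colon
          (Ideal.span {coverMonomial K (C t i)}) := by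
      rw [hT]
      exact Ideal.subset_span ⟨v, hvT, rfl⟩
    rw [Ideal.mem_colon_span_singleton] at h2
    have hspan : Ideal.span ((fun j => coverMonomial K (C t j)) '' {j | j < i}) =
        Ideal.span ((fun s => monomial s (1 : K)) ''
          ((fun j => indF (C t j)) '' {j | j < i})) := by
      rw [Set.image_image]
      congr 1
      apply Set.image_congr
      intro j _
      exact coverMonomial_eq K _
    rw [hspan] at h2
    have hXv : (X v : MvPolynomial V K) * coverMonomial K (C t i) =
        monomial (Finsupp.single v 1 + indF (C t i)) (1 : K) := by
      rw [coverMonomial_eq, X, monomial_mul, one_mul]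
    rw [hXv] at h2
    obtain ⟨si, hsi, hle⟩ := MvPolynomial.mem_ideal_span_monomial_image.mp h2
      (Finsupp.single v 1 + indF (C t i))
      (by rw [MvPolynomial.support_monomial]; simp)
    obtain ⟨j, hj, rfl⟩ := hsi
    have hsub : C t j ⊆ insert v (C t i) := indF_le_single_add_iff.mp hle
    have hvnot : v ∉ C t i := by
      intro hvC
      rw [Finset.insert_eq_self.mpr hvC] at hsub
      have := min_cover_incomp (hCmin t j) (hCmin t i) hsub
      exact (ne_of_lt hj) (hCinj t this)
    exact ⟨v, hvCi', hvnot, j, hj, hsub⟩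
  have hkey : ∀ p q : (Σ t : Fin r, Fin (s t)), toLex q < toLex p →
      ∃ v, v ∈ A q ∧ v ∉ A p ∧ ∃ k, toLex k < toLex p ∧ A k ⊆ insert v (A p) := by
    rintro ⟨t, i⟩ ⟨t', i'⟩ hqp
    rcases Sigma.Lex.lt_def.mp hqp with hlt | ⟨heq, hlt⟩
    · -- case t' < t
      have hlt : t' < t := hlt
      have hne : t' ≠ t := ne_of_lt hlt
      refine ⟨x t, Finset.mem_union_left _
        ((G.mem_neighborFinset _ _).mpr (hadj t' t hne)), hxtnotA t i, ?_⟩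
      have hW0cov : IsVertexCover G ((insert (x t) (A ⟨t, i⟩)).erase (x t0)) := by
        intro u v huv
        have key : ∀ a b : V, G.Adj a b → a = x t0 →
            b ∈ (insert (x t) (A ⟨t, i⟩)).erase (x t0) := by
          intro a b hab ha
          subst ha
          obtain ⟨j, hj, rfl⟩ := hnbr0 b hab
          refine Finset.mem_erase.mpr ⟨fun h => hj (hx h), ?_⟩
          rcases eq_or_ne j t with rfl | hjt
          · exact Finset.mem_insert_self _ _
          · exact Finset.mem_insert_of_mem (hxt'A t j i hjt)
        rcases (hAmin ⟨t, i⟩).1 huv with h | h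
        · by_cases hu0 : u = x t0
          · exact Or.inr (key u v huv hu0)
          · exact Or.inl (Finset.mem_erase.mpr ⟨hu0, Finset.mem_insert_of_mem h⟩)
        · by_cases hv0 : v = x t0
          · exact Or.inl (key v u huv.symm hv0)
          · exact Or.inr (Finset.mem_erase.mpr ⟨hv0, Finset.mem_insert_of_mem h⟩)
      obtain ⟨D, hDW, hDmin⟩ := exists_min_subcover G _ hW0cov
      obtain ⟨⟨t'', i''⟩, hAD⟩ := hAchar D hDmin
      have ht''0 : t'' = t0 := by
        by_contra hne0
        have hmem : x t0 ∈ A ⟨t'', i''⟩ := hxt'A t'' t0 i'' (fun h => hne0 h.symm)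
        rw [hAD] at hmem
        exact (Finset.mem_erase.mp (hDW hmem)).1 rfl
      refine ⟨⟨t'', i''⟩, ?_, ?_⟩
      · apply Sigma.Lex.lt_def.mpr
        left
        show t'' < t
        rw [ht''0]
        have h1 : (t' : ℕ) < (t : ℕ) := hlt
        exact Fin.lt_def.mpr (by simp [ht0]; omega)
      · rw [hAD]
        exact hDW.trans (Finset.erase_subset _ _)
    · -- case t' = t
      cases heq
      have hlt : i' < i := hlt
      obtain ⟨v, hv1, hv2, j, hj, hsub⟩ := hsmall t i i' hlt
      have hvnN : v ∉ G.neighborFinset (x t) := by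
        intro h
        exact hdisj t i' hv1 (Finset.mem_insert_of_mem h)
      refine ⟨v, Finset.mem_union_right _ hv1, ?_, ⟨t, j⟩, ?_, ?_⟩
      · intro h
        rcases Finset.mem_union.mp h with h | h
        · exact hvnN h
        · exact hv2 h
      · exact Sigma.Lex.lt_def.mpr (Or.inr ⟨rfl, hj⟩)
      · intro w hw
        rcases Finset.mem_union.mp hw with h | h
        · exact Finset.mem_insert_of_mem (Finset.mem_union_left _ h)
        · rcases Finset.mem_insert.mp (hsub h) with rfl | h'
          · exact Finset.mem_insert_self _ _
          · exact Finset.mem_insert_of_mem (Finset.mem_union_right _ h')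
  have hprod : ∀ p : (Σ t : Fin r, Fin (s t)),
      coverMonomial K (G.neighborFinset (x p.1)) * coverMonomial K (C p.1 p.2) =
        monomial (indF (A p)) (1 : K) := by
    intro p
    rw [← coverMonomial_eq]
    unfold A
    rw [coverMonomial, coverMonomial, coverMonomial, ← Finset.prod_union]
    rw [Finset.disjoint_right]
    intro w hw
    intro hw'
    exact hdisj p.1 p.2 hw (Finset.mem_insert_of_mem hw')
  have hspan : ∀ S : Set (Lex (Σ t : Fin r, Fin (s t))),
      Ideal.span ((fun q : Lex (Σ t : Fin r, Fin (s t)) =>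
        coverMonomial K (G.neighborFinset (x (ofLex q).1)) *
          coverMonomial K (C (ofLex q).1 (ofLex q).2)) '' S) =
      Ideal.span ((fun s => monomial s (1 : K)) ''
        ((fun q : Lex (Σ t : Fin r, Fin (s t)) => indF (A (ofLex q))) '' S)) := by
    intro S
    rw [Set.image_image]
    congr 1
    apply Set.image_congr
    intro q _
    exact hprod (ofLex q)
  constructor
  · unfold coverIdeal
    congr 1
    ext m
    constructor
    · rintro ⟨p, rfl⟩
      refine ⟨A (ofLex p), hAmin (ofLex p), ?_⟩
      rw [coverMonomial_eq]
      exact hprod (ofLex p)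
    · rintro ⟨D, hD, rfl⟩
      obtain ⟨p, rfl⟩ := hAchar D hD
      refine ⟨toLex p, ?_⟩
      rw [coverMonomial_eq]
      exact hprod p
  · intro p
    refine ⟨{v | v ∉ A (ofLex p) ∧ ∃ k, toLex k < p ∧ A k ⊆ insert v (A (ofLex p))}, ?_⟩
    apply le_antisymm
    · intro f hf
      rw [Ideal.mem_colon_span_singleton, hspan] at hf
      beta_reduce at hf
      rw [hprod (ofLex p)] at hf
      apply MvPolynomial.mem_ideal_span_X_image.mpr
      intro a ha
      have hmem : (a + indF (A (ofLex p))) ∈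
          (f * monomial (indF (A (ofLex p))) (1 : K)).support := by
        rw [MvPolynomial.mem_support_iff, MvPolynomial.coeff_mul_monomial, mul_one]
        exact MvPolynomial.mem_support_iff.mp ha
      obtain ⟨si, hsi, hle⟩ := MvPolynomial.mem_ideal_span_monomial_image.mp hf _ hmem
      obtain ⟨q, hq, rfl⟩ := hsi
      obtain ⟨v, hvAq, hvAp, k, hk, hsub⟩ := hkey (ofLex p) (ofLex q) hq
      refine ⟨v, ⟨hvAp, k, hk, hsub⟩, ?_⟩
      have h1 := hle v
      rw [indF_apply, if_pos hvAq, Finsupp.add_apply, indF_apply, if_neg hvAp] at h1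
      omega
    · rw [Ideal.span_le]
      rintro _ ⟨v, ⟨hvAp, k, hk, hsub⟩, rfl⟩
      rw [SetLike.mem_coe, Ideal.mem_colon_span_singleton, hspan]
      beta_reduce
      rw [hprod (ofLex p)]
      have hXv : (X v : MvPolynomial V K) * monomial (indF (A (ofLex p))) (1 : K) =
          monomial (Finsupp.single v 1 + indF (A (ofLex p))) (1 : K) := by
        rw [X, monomial_mul, one_mul]
      rw [hXv]
      apply MvPolynomial.mem_ideal_span_monomial_image.mpr
      intro xi hxi
      rw [MvPolynomial.support_monomial, if_neg one_ne_zero, Finset.mem_singleton] at hxi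
      subst hxi
      exact ⟨indF (A k), ⟨toLex k, hk, rfl⟩, indF_le_single_add_iff.mpr hsub⟩
end

section
/- Let G be a chordal graph and x a vertex such that N[x] induces a clique on at least 2 vertices. Let A_1, …, A_a be the minimal generators of J(G \ N[x]) and B_1, …, B_b the minimal generators of J(G \ {x}), both in linear quotients order, and let B_{i_1}, …, B_{i_k} (i_1 < ⋯ < i_k) be those B_j not containing N(x). Then N(x)A_1, …, N(x)A_a, xB_{i_1}, …, xB_{i_k} is a linear quotients ordering for J(G). -/
open Finset

variable {V : Type} [Fintype V] [DecidableEq V]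

open Finset

section Aux

open MvPolynomial

variable {V : Type} [DecidableEq V] {K : Type} [Field K]

/-- product of variables as monomial support exponent -/
noncomputable def expOf (C : Finset V) : V →₀ ℕ := ∑ v ∈ C, Finsupp.single v 1

lemma expOf_apply (C : Finset V) (v : V) : expOf C v = if v ∈ C then 1 else 0 := by
  classical
  rw [expOf, Finset.sum_apply']
  simp_rw [Finsupp.single_apply]
  exact Finset.sum_ite_eq' C v (fun _ => 1)

lemma prodX_eq_monomial (C : Finset V) :
    (∏ v ∈ C, X v : MvPolynomial V K) = monomial (expOf C) 1 := by
  classical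
  induction C using Finset.cons_induction with
  | empty => simp [expOf]
  | cons a s ha ih =>
      have he : expOf (cons a s ha) = Finsupp.single a 1 + expOf s := by
        rw [expOf, Finset.sum_cons]; rfl
      rw [Finset.prod_cons, ih, he, X, monomial_mul, one_mul]

lemma expOf_le_iff {C : Finset V} {d : V →₀ ℕ} : expOf C ≤ d ↔ ∀ v ∈ C, d v ≠ 0 := by
  rw [Finsupp.le_def]
  constructor
  · intro h v hv
    have := h v
    rw [expOf_apply, if_pos hv] at this
    omega
  · intro h v
    rw [expOf_apply]
    split
    · have := h v ‹_›; omega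
    · omega

lemma mem_span_covers {ι : Type} {S : Set ι} {C : ι → Finset V} {f : MvPolynomial V K} :
    f ∈ Ideal.span ((fun l => coverMonomial K (C l)) '' S) ↔
      ∀ d ∈ f.support, ∃ l ∈ S, ∀ v ∈ C l, d v ≠ 0 := by
  have himg : ((fun l => coverMonomial K (C l)) '' S)
      = ((fun s => monomial s (1 : K)) '' ((fun l => expOf (C l)) '' S)) := by
    rw [Set.image_image]
    simp only [coverMonomial, prodX_eq_monomial]
  rw [himg, mem_ideal_span_monomial_image]
  constructor
  · intro h d hd
    obtain ⟨si, ⟨l, hl, rfl⟩, hle⟩ := h d hd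
    exact ⟨l, hl, expOf_le_iff.mp hle⟩
  · intro h d hd
    obtain ⟨l, hl, hle⟩ := h d hd
    exact ⟨expOf (C l), ⟨l, hl, rfl⟩, expOf_le_iff.mpr hle⟩

lemma colon_eq {ι : Type} (S : Set ι) (C : ι → Finset V) (Ci : Finset V)
    (hgood : ∀ l ∈ S, ∃ v, v ∈ C l ∧ v ∉ Ci ∧ ∃ l' ∈ S, C l' ⊆ insert v Ci) :
    (Ideal.span ((fun l => coverMonomial K (C l)) '' S)).colon
        (Ideal.span {coverMonomial K Ci}) =
      Ideal.span ((fun v => (X v : MvPolynomial V K)) ''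
        {v | v ∉ Ci ∧ ∃ l ∈ S, C l ⊆ insert v Ci}) := by
  ext f
  rw [Ideal.mem_colon_span_singleton, mem_span_covers, mem_ideal_span_X_image]
  constructor
  · intro h d hd
    have hdc : (d + expOf Ci) ∈ (f * coverMonomial K Ci).support := by
      rw [mem_support_iff, coverMonomial, prodX_eq_monomial, coeff_mul_monomial, mul_one]
      exact mem_support_iff.mp hd
    obtain ⟨l, hlS, hl⟩ := h _ hdc
    obtain ⟨v, hvCl, hvCi, l', hl'S, hl'⟩ := hgood l hlS
    refine ⟨v, ⟨hvCi, l', hl'S, hl'⟩, ?_⟩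
    have := hl v hvCl
    rw [Finsupp.add_apply, expOf_apply, if_neg hvCi] at this
    simpa using this
  · intro h d hd
    have hsupp : (f * coverMonomial K Ci).support
        = f.support.map (addRightEmbedding (expOf Ci)) := by
      rw [coverMonomial, prodX_eq_monomial, ← single_eq_monomial]
      exact AddMonoidAlgebra.support_coeff_mul_single f 1 (by simp) (expOf Ci)
    rw [hsupp, Finset.mem_map] at hd
    obtain ⟨d', hd', rfl⟩ := hd
    obtain ⟨v, ⟨hvCi, l, hlS, hl⟩, hv⟩ := h d' hd'
    refine ⟨l, hlS, fun w hw => ?_⟩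
    have hw' := hl hw
    rw [Finset.mem_insert] at hw'
    show d' w + expOf Ci w ≠ 0
    rcases hw' with rfl | hw'
    · intro hc; exact hv (by omega)
    · rw [expOf_apply, if_pos hw']; omega

lemma good_of_LQ {ι : Type} [LinearOrder ι] {C : ι → Finset V}
    (h : IsLinQuotOrd (fun i => coverMonomial K (C i))) :
    ∀ i j : ι, j < i → ∃ v, v ∈ C j ∧ v ∉ C i ∧ ∃ l, l < i ∧ C l ⊆ insert v (C i) := by
  intro i j hj
  obtain ⟨T, hT⟩ := h i
  have h1 : coverMonomial K (C j \ C i) ∈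
      (Ideal.span ((fun l => coverMonomial K (C l)) '' {l | l < i})).colon
        (Ideal.span {coverMonomial K (C i)}) := by
    rw [Ideal.mem_colon_span_singleton, mem_span_covers]
    intro d hd
    refine ⟨j, hj, fun v hv => ?_⟩
    have hdval : d = expOf (C j \ C i) + expOf (C i) := by
      have : coverMonomial K (C j \ C i) * coverMonomial K (C i)
          = monomial (expOf (C j \ C i) + expOf (C i)) (1 : K) := by
        rw [coverMonomial, coverMonomial, prodX_eq_monomial, prodX_eq_monomial,
          monomial_mul, one_mul]
      rw [this] at hd
      classical
      rw [support_monomial, if_neg one_ne_zero, Finset.mem_singleton] at hd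
      exact hd
    subst hdval
    rw [Finsupp.add_apply, expOf_apply, expOf_apply]
    by_cases hvi : v ∈ C i
    · rw [if_pos hvi]; omega
    · rw [if_pos (Finset.mem_sdiff.mpr ⟨hv, hvi⟩)]; omega
  rw [hT, mem_ideal_span_X_image] at h1
  have hsupp1 : (coverMonomial K (C j \ C i) : MvPolynomial V K).support
      = {expOf (C j \ C i)} := by
    classical
    rw [coverMonomial, prodX_eq_monomial, support_monomial, if_neg one_ne_zero]
  obtain ⟨v, hvT, hv⟩ := h1 (expOf (C j \ C i)) (by rw [hsupp1]; exact Finset.mem_singleton_self _)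
  rw [expOf_apply] at hv
  have hvmem : v ∈ C j \ C i := by
    by_contra hc
    rw [if_neg hc] at hv
    exact hv rfl
  rw [Finset.mem_sdiff] at hvmem
  have h2 : (X v : MvPolynomial V K) ∈
      (Ideal.span ((fun l => coverMonomial K (C l)) '' {l | l < i})).colon
        (Ideal.span {coverMonomial K (C i)}) := by
    rw [hT]
    exact Ideal.subset_span ⟨v, hvT, rfl⟩
  rw [Ideal.mem_colon_span_singleton, mem_span_covers] at h2
  have hXsupp : (X v * coverMonomial K (C i) : MvPolynomial V K).support
      = {Finsupp.single v 1 + expOf (C i)} := by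
    classical
    rw [coverMonomial, prodX_eq_monomial, X, monomial_mul, one_mul, support_monomial,
      if_neg one_ne_zero]
  obtain ⟨l, hl, hlmem⟩ := h2 (Finsupp.single v 1 + expOf (C i))
    (by rw [hXsupp]; exact Finset.mem_singleton_self _)
  refine ⟨v, hvmem.1, hvmem.2, l, hl, fun w hw => ?_⟩
  have := hlmem w hw
  rw [Finsupp.add_apply, Finsupp.single_apply, expOf_apply] at this
  rw [Finset.mem_insert]
  by_contra hc
  push_neg at hc
  rw [if_neg (fun e => hc.1 e.symm), if_neg hc.2] at this
  exact this rfl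

end Aux
section GraphAux

variable {V : Type} [Fintype V] [DecidableEq V] {G : SimpleGraph V}

lemma isVertexCover_mono {C C' : Finset V} (h : C ⊆ C') (hC : IsVertexCover G C) :
    IsVertexCover G C' :=
  fun _ _ huv => (hC huv).imp (fun hu => h hu) (fun hv => h hv)

lemma exists_minCover_subset (G : SimpleGraph V) :
    ∀ C : Finset V, IsVertexCover G C → ∃ D, D ⊆ C ∧ IsMinVertexCover G D := by
  intro C
  induction C using Finset.strongInduction with
  | _ C ih =>
    intro hC
    by_cases h : ∀ D : Finset V, D ⊂ C → ¬ IsVertexCover G D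
    · exact ⟨C, Finset.Subset.refl C, hC, h⟩
    · push_neg at h
      obtain ⟨D, hD, hDc⟩ := h
      obtain ⟨E, hE, hEm⟩ := ih D hD hDc
      exact ⟨E, hE.trans hD.subset, hEm⟩

lemma minCover_delete_not_mem {A : Finset V} {C : Finset V}
    (h : IsMinVertexCover (deleteVerts G A) C) : ∀ v ∈ A, v ∉ C := by
  intro v hvA hvC
  refine h.2 (C.erase v) (Finset.erase_ssubset hvC) ?_
  intro u w huw
  rcases h.1 huw with hu | hw
  · exact Or.inl (Finset.mem_erase.mpr ⟨by rintro rfl; exact huw.2.1 hvA, hu⟩)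
  · exact Or.inr (Finset.mem_erase.mpr ⟨by rintro rfl; exact huw.2.2 hvA, hw⟩)

variable (G) [DecidableRel G.Adj] (x : V)

lemma minCover_union_N {D : Finset V}
    (hD : IsMinVertexCover (deleteVerts G (closedNbhd G x)) D) :
    IsMinVertexCover G (G.neighborFinset x ∪ D) := by
  have hdisj := minCover_delete_not_mem hD
  have hxN : x ∉ G.neighborFinset x := by simp
  have hxD : x ∉ D := hdisj x (Finset.mem_insert_self _ _)
  constructor
  · intro u v huv
    by_cases hu : u ∈ G.neighborFinset x
    · exact Or.inl (Finset.mem_union_left _ hu)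
    by_cases hv : v ∈ G.neighborFinset x
    · exact Or.inr (Finset.mem_union_left _ hv)
    have hux : u ≠ x := by rintro rfl; exact hv ((SimpleGraph.mem_neighborFinset _ _ _).mpr huv)
    have hvx : v ≠ x := by rintro rfl; exact hu ((SimpleGraph.mem_neighborFinset _ _ _).mpr huv.symm)
    have hadj : (deleteVerts G (closedNbhd G x)).Adj u v :=
      ⟨huv, by simp [closedNbhd, hux, hu], by simp [closedNbhd, hvx, hv]⟩
    rcases hD.1 hadj with h | h
    · exact Or.inl (Finset.mem_union_right _ h)
    · exact Or.inr (Finset.mem_union_right _ h)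
  · intro C' hC' hcov
    obtain ⟨w, hwmem, hwC'⟩ := Finset.exists_of_ssubset hC'
    rcases Finset.mem_union.mp hwmem with hwN | hwD
    · have hadj : G.Adj x w := (SimpleGraph.mem_neighborFinset _ _ _).mp hwN
      rcases hcov hadj with hx | hw
      · rcases Finset.mem_union.mp (hC'.subset hx) with h | h
        · exact hxN h
        · exact hxD h
      · exact hwC' hw
    · refine hD.2 (C' \ G.neighborFinset x) ?_ ?_
      · have hsub : C' \ G.neighborFinset x ⊆ D := by
          intro z hz
          rw [Finset.mem_sdiff] at hz
          rcases Finset.mem_union.mp (hC'.subset hz.1) with h | h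
          · exact absurd h hz.2
          · exact h
        exact (Finset.ssubset_iff_of_subset hsub).mpr
          ⟨w, hwD, fun hc => hwC' (Finset.mem_sdiff.mp hc).1⟩
      · intro u v huv
        rcases hcov huv.1 with h | h
        · exact Or.inl (Finset.mem_sdiff.mpr
            ⟨h, fun hN => huv.2.1 (Finset.mem_insert_of_mem hN)⟩)
        · exact Or.inr (Finset.mem_sdiff.mpr
            ⟨h, fun hN => huv.2.2 (Finset.mem_insert_of_mem hN)⟩)

lemma minCover_insert_x {Bj : Finset V}
    (hB : IsMinVertexCover (deleteVerts G {x}) Bj) (hN : ¬ G.neighborFinset x ⊆ Bj) :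
    IsMinVertexCover G (insert x Bj) := by
  have hxB : x ∉ Bj := minCover_delete_not_mem hB x (Finset.mem_singleton_self x)
  constructor
  · intro u v huv
    by_cases hu : u = x
    · exact Or.inl (by rw [hu]; exact Finset.mem_insert_self x Bj)
    by_cases hv : v = x
    · exact Or.inr (by rw [hv]; exact Finset.mem_insert_self x Bj)
    rcases hB.1 ⟨huv, by simp [hu], by simp [hv]⟩ with h | h
    · exact Or.inl (Finset.mem_insert_of_mem h)
    · exact Or.inr (Finset.mem_insert_of_mem h)
  · intro C' hC' hcov
    obtain ⟨w, hwmem, hwC'⟩ := Finset.exists_of_ssubset hC'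
    rcases Finset.mem_insert.mp hwmem with hwx | hwB
    · obtain ⟨y, hyN, hyB⟩ := Finset.not_subset.mp hN
      have hadj : G.Adj x y := (SimpleGraph.mem_neighborFinset _ _ _).mp hyN
      rcases hcov hadj with h | h
      · exact hwC' (by rw [hwx]; exact h)
      · rcases Finset.mem_insert.mp (hC'.subset h) with hyx | h2
        · rw [hyx] at hyN; simp at hyN
        · exact hyB h2
    · refine hB.2 (C'.erase x) ?_ ?_
      · have hsub : C'.erase x ⊆ Bj := by
          intro z hz
          rw [Finset.mem_erase] at hz
          rcases Finset.mem_insert.mp (hC'.subset hz.2) with h | h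
          · exact absurd h hz.1
          · exact h
        exact (Finset.ssubset_iff_of_subset hsub).mpr
          ⟨w, hwB, fun hc => hwC' (Finset.mem_erase.mp hc).2⟩
      · intro u v huv
        rcases hcov huv.1 with h | h
        · exact Or.inl (Finset.mem_erase.mpr ⟨by simpa using huv.2.1, h⟩)
        · exact Or.inr (Finset.mem_erase.mpr ⟨by simpa using huv.2.2, h⟩)

lemma classification_not_mem {C : Finset V} (hC : IsMinVertexCover G C) (hxC : x ∉ C) :
    G.neighborFinset x ⊆ C ∧
      IsMinVertexCover (deleteVerts G (closedNbhd G x)) (C \ G.neighborFinset x) := by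
  have hNC : G.neighborFinset x ⊆ C := by
    intro y hy
    rcases hC.1 ((SimpleGraph.mem_neighborFinset _ _ _).mp hy) with h | h
    · exact absurd h hxC
    · exact h
  refine ⟨hNC, ?_, ?_⟩
  · intro u v huv
    rcases hC.1 huv.1 with h | h
    · exact Or.inl (Finset.mem_sdiff.mpr ⟨h, fun hN => huv.2.1 (Finset.mem_insert_of_mem hN)⟩)
    · exact Or.inr (Finset.mem_sdiff.mpr ⟨h, fun hN => huv.2.2 (Finset.mem_insert_of_mem hN)⟩)
  · intro D' hD' hcov
    obtain ⟨z, hz, hzD'⟩ := Finset.exists_of_ssubset hD'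
    refine hC.2 (G.neighborFinset x ∪ D') ?_ ?_
    · have hsub : G.neighborFinset x ∪ D' ⊆ C := by
        intro u hu
        rcases Finset.mem_union.mp hu with h | h
        · exact hNC h
        · exact (Finset.mem_sdiff.mp (hD'.subset h)).1
      refine (Finset.ssubset_iff_of_subset hsub).mpr ⟨z, (Finset.mem_sdiff.mp hz).1, ?_⟩
      intro hc
      rcases Finset.mem_union.mp hc with h | h
      · exact (Finset.mem_sdiff.mp hz).2 h
      · exact hzD' h
    · intro u v huv
      by_cases hu : u ∈ G.neighborFinset x
      · exact Or.inl (Finset.mem_union_left _ hu)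
      by_cases hv : v ∈ G.neighborFinset x
      · exact Or.inr (Finset.mem_union_left _ hv)
      have hux : u ≠ x := by rintro rfl; exact hv ((SimpleGraph.mem_neighborFinset _ _ _).mpr huv)
      have hvx : v ≠ x := by rintro rfl; exact hu ((SimpleGraph.mem_neighborFinset _ _ _).mpr huv.symm)
      rcases hcov ⟨huv, by simp [closedNbhd, hux, hu], by simp [closedNbhd, hvx, hv]⟩ with h | h
      · exact Or.inl (Finset.mem_union_right _ h)
      · exact Or.inr (Finset.mem_union_right _ h)

lemma classification_mem {C : Finset V} (hC : IsMinVertexCover G C) (hxC : x ∈ C) :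
    IsMinVertexCover (deleteVerts G {x}) (C.erase x) ∧ ¬ G.neighborFinset x ⊆ C.erase x := by
  refine ⟨⟨?_, ?_⟩, ?_⟩
  · intro u v huv
    rcases hC.1 huv.1 with h | h
    · exact Or.inl (Finset.mem_erase.mpr ⟨by simpa using huv.2.1, h⟩)
    · exact Or.inr (Finset.mem_erase.mpr ⟨by simpa using huv.2.2, h⟩)
  · intro D' hD' hcov
    obtain ⟨z, hz, hzD'⟩ := Finset.exists_of_ssubset hD'
    refine hC.2 (insert x D') ?_ ?_
    · have hsub : insert x D' ⊆ C := by
        intro u hu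
        rcases Finset.mem_insert.mp hu with h | h
        · exact (by rw [h]; exact hxC)
        · exact (Finset.mem_erase.mp (hD'.subset h)).2
      refine (Finset.ssubset_iff_of_subset hsub).mpr ⟨z, (Finset.mem_erase.mp hz).2, ?_⟩
      intro hc
      rcases Finset.mem_insert.mp hc with h | h
      · exact (Finset.mem_erase.mp hz).1 h
      · exact hzD' h
    · intro u v huv
      by_cases hu : u = x
      · exact Or.inl (by rw [hu]; exact Finset.mem_insert_self x D')
      by_cases hv : v = x
      · exact Or.inr (by rw [hv]; exact Finset.mem_insert_self x D')
      rcases hcov ⟨huv, by simp [hu], by simp [hv]⟩ with h | h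
      · exact Or.inl (Finset.mem_insert_of_mem h)
      · exact Or.inr (Finset.mem_insert_of_mem h)
  · intro hsub
    refine hC.2 (C.erase x) (Finset.erase_ssubset hxC) ?_
    intro u v huv
    by_cases hu : u = x
    · subst hu
      exact Or.inr (hsub ((SimpleGraph.mem_neighborFinset _ _ _).mpr huv))
    by_cases hv : v = x
    · subst hv
      exact Or.inl (hsub ((SimpleGraph.mem_neighborFinset _ _ _).mpr huv.symm))
    rcases hC.1 huv with h | h
    · exact Or.inl (Finset.mem_erase.mpr ⟨hu, h⟩)
    · exact Or.inr (Finset.mem_erase.mpr ⟨hv, h⟩)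

lemma nbhd_sdiff_subsingleton (hcl : G.IsClique (closedNbhd G x : Set V))
    {Bj : Finset V} (hB : IsVertexCover (deleteVerts G {x}) Bj) :
    ∀ y ∈ G.neighborFinset x \ Bj, ∀ z ∈ G.neighborFinset x \ Bj, y = z := by
  intro y hy z hz
  rw [Finset.mem_sdiff] at hy hz
  by_contra hne
  have hyx : y ≠ x := by rintro rfl; exact (by simp : y ∉ G.neighborFinset y) hy.1
  have hzx : z ≠ x := by rintro rfl; exact (by simp : z ∉ G.neighborFinset z) hz.1
  have hadj : G.Adj y z :=
    hcl (Finset.mem_coe.mpr (Finset.mem_insert_of_mem hy.1))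
      (Finset.mem_coe.mpr (Finset.mem_insert_of_mem hz.1)) hne
  rcases hB ⟨hadj, by simp [hyx], by simp [hzx]⟩ with h | h
  · exact hy.2 h
  · exact hz.2 h

lemma sdiff_cover {Bj : Finset V} (hB : IsVertexCover (deleteVerts G {x}) Bj) :
    IsVertexCover (deleteVerts G (closedNbhd G x)) (Bj \ G.neighborFinset x) := by
  intro u v huv
  have hu : u ∉ closedNbhd G x := huv.2.1
  have hv : v ∉ closedNbhd G x := huv.2.2
  have h1 : (deleteVerts G {x}).Adj u v := by
    refine ⟨huv.1, ?_, ?_⟩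
    · simp only [Finset.mem_singleton]; rintro rfl; exact hu (Finset.mem_insert_self _ _)
    · simp only [Finset.mem_singleton]; rintro rfl; exact hv (Finset.mem_insert_self _ _)
  rcases hB h1 with h | h
  · exact Or.inl (Finset.mem_sdiff.mpr ⟨h, fun hN => hu (Finset.mem_insert_of_mem hN)⟩)
  · exact Or.inr (Finset.mem_sdiff.mpr ⟨h, fun hN => hv (Finset.mem_insert_of_mem hN)⟩)

end GraphAux
open MvPolynomial in
/-- The combined family of covers. -/
def CCfam {V : Type} [DecidableEq V] {a kk : ℕ} (N : Finset V) (x : V)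
    (A : Fin a → Finset V) (B' : Fin kk → Finset V) : Fin a ⊕ₗ Fin kk → Finset V :=
  fun p => Sum.elim (fun i => N ∪ A i) (fun q => insert x (B' q)) (ofLex p)

lemma CCfam_inl {V : Type} [DecidableEq V] {a kk : ℕ} (N : Finset V) (x : V)
    (A : Fin a → Finset V) (B' : Fin kk → Finset V) (i : Fin a) :
    CCfam N x A B' (Sum.inl i) = N ∪ A i := rfl

lemma CCfam_inr {V : Type} [DecidableEq V] {a kk : ℕ} (N : Finset V) (x : V)
    (A : Fin a → Finset V) (B' : Fin kk → Finset V) (q : Fin kk) :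
    CCfam N x A B' (Sum.inr q) = insert x (B' q) := rfl

open MvPolynomial in
/-- Erey's recursive construction of a linear quotients ordering for `J(G)` from those of
`J(G \ N[x])` and `J(G \ x)`. -/
theorem stmt_7 (K : Type) [Field K] {V : Type} [Fintype V] [LinearOrder V]
    (G : SimpleGraph V) [DecidableRel G.Adj] (hG : IsChordal G) (x : V)
    (hcl : G.IsClique (closedNbhd G x : Set V)) (hcard : 2 ≤ (closedNbhd G x).card)
    (a b kk : ℕ) (A : Fin a → Finset V) (B : Fin b → Finset V)
    (hAinj : Function.Injective A)
    (hAenum : ∀ D : Finset V,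
      IsMinVertexCover (deleteVerts G (closedNbhd G x)) D ↔ ∃ i, A i = D)
    (hALQ : IsLinQuotOrd (fun i => coverMonomial K (A i)))
    (hBinj : Function.Injective B)
    (hBenum : ∀ D : Finset V, IsMinVertexCover (deleteVerts G {x}) D ↔ ∃ i, B i = D)
    (hBLQ : IsLinQuotOrd (fun i => coverMonomial K (B i)))
    (idx : Fin kk → Fin b) (hidx : StrictMono idx)
    (hidxenum : ∀ j : Fin b, (∃ p, idx p = j) ↔ ¬ G.neighborFinset x ⊆ B j) :
    Ideal.span (Set.range (fun p : Fin a ⊕ₗ Fin kk => Sum.elim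
        (fun i => coverMonomial K (G.neighborFinset x) * coverMonomial K (A i))
        (fun p => X x * coverMonomial K (B (idx p))) (ofLex p))) = coverIdeal K G ∧
    IsLinQuotOrd (fun p : Fin a ⊕ₗ Fin kk => Sum.elim
        (fun i => coverMonomial K (G.neighborFinset x) * coverMonomial K (A i))
        (fun p => X x * coverMonomial K (B (idx p))) (ofLex p)) := by
  classical
  have hxN : x ∉ G.neighborFinset x := by simp
  have hAmin : ∀ i, IsMinVertexCover (deleteVerts G (closedNbhd G x)) (A i) :=
    fun i => (hAenum (A i)).mpr ⟨i, rfl⟩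
  have hBmin : ∀ j, IsMinVertexCover (deleteVerts G {x}) (B j) :=
    fun j => (hBenum (B j)).mpr ⟨j, rfl⟩
  have hAN : ∀ i, ∀ v ∈ G.neighborFinset x, v ∉ A i :=
    fun i v hv => minCover_delete_not_mem (hAmin i) v (Finset.mem_insert_of_mem hv)
  have hBx : ∀ j, x ∉ B j :=
    fun j => minCover_delete_not_mem (hBmin j) x (Finset.mem_singleton_self x)
  set CC := CCfam (G.neighborFinset x) x A (fun q => B (idx q)) with hCCdef
  have hCCmin : ∀ p, IsMinVertexCover G (CC p) := by
    intro p
    rcases p with i | q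
    · rw [hCCdef, CCfam_inl]
      exact minCover_union_N G x (hAmin i)
    · rw [hCCdef, CCfam_inr]
      exact minCover_insert_x G x (hBmin (idx q)) ((hidxenum (idx q)).mp ⟨q, rfl⟩)
  have hfun : (fun p : Fin a ⊕ₗ Fin kk => Sum.elim
        (fun i => coverMonomial K (G.neighborFinset x) * coverMonomial K (A i))
        (fun p => X x * coverMonomial K (B (idx p))) (ofLex p))
      = fun p => coverMonomial K (CC p) := by
    funext p
    rcases p with i | q
    · show coverMonomial K (G.neighborFinset x) * coverMonomial K (A i) = _
      rw [hCCdef, CCfam_inl]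
      have hdisj : Disjoint (G.neighborFinset x) (A i) :=
        Finset.disjoint_left.mpr (fun {v} hv hv2 => hAN i v hv hv2)
      show (∏ v ∈ G.neighborFinset x, X v) * (∏ v ∈ A i, X v)
          = ∏ v ∈ G.neighborFinset x ∪ A i, (X v : MvPolynomial V K)
      exact (Finset.prod_union hdisj).symm
    · show X x * coverMonomial K (B (idx q)) = _
      rw [hCCdef, CCfam_inr]
      show X x * (∏ v ∈ B (idx q), X v) = ∏ v ∈ insert x (B (idx q)), (X v : MvPolynomial V K)
      exact (Finset.prod_insert (hBx (idx q))).symm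
  have hGoodA := good_of_LQ (K := K) hALQ
  have hGoodB := good_of_LQ (K := K) hBLQ
  have hGood : ∀ i : Fin a ⊕ₗ Fin kk, ∀ l ∈ {j : Fin a ⊕ₗ Fin kk | j < i},
      ∃ v, v ∈ CC l ∧ v ∉ CC i ∧
        ∃ l' ∈ {j : Fin a ⊕ₗ Fin kk | j < i}, CC l' ⊆ insert v (CC i) := by
    intro i l hl
    rcases i with i' | p
    · rcases l with j' | q
      have hl' := hl
      · have hij : j' < i' := Sum.Lex.inl_lt_inl_iff.mp hl'
        obtain ⟨v, hvj, hvi, m, hm, hsub⟩ := hGoodA i' j' hij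
        refine ⟨v, ?_, ?_, Sum.inl m, Sum.Lex.inl_lt_inl_iff.mpr hm, ?_⟩
        · rw [hCCdef, CCfam_inl]
          exact Finset.mem_union_right _ hvj
        · rw [hCCdef, CCfam_inl, Finset.mem_union]
          rintro (h | h)
          · exact hAN j' v h hvj
          · exact hvi h
        · rw [hCCdef, CCfam_inl, CCfam_inl]
          intro w hw
          rcases Finset.mem_union.mp hw with h | h
          · exact Finset.mem_insert_of_mem (Finset.mem_union_left _ h)
          · rcases Finset.mem_insert.mp (hsub h) with h2 | h2
            · rw [h2]; exact Finset.mem_insert_self _ _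
            · exact Finset.mem_insert_of_mem (Finset.mem_union_right _ h2)
      · exact absurd hl Sum.Lex.not_inr_lt_inl
    · have hNsub : ¬ G.neighborFinset x ⊆ B (idx p) := (hidxenum (idx p)).mp ⟨p, rfl⟩
      obtain ⟨y, hyN, hyB⟩ := Finset.not_subset.mp hNsub
      have hsing := nbhd_sdiff_subsingleton G x hcl (hBmin (idx p)).1
      rcases l with s | q
      · refine ⟨y, ?_, ?_, ?_⟩
        · rw [hCCdef, CCfam_inl]
          exact Finset.mem_union_left _ hyN
        · rw [hCCdef, CCfam_inr, Finset.mem_insert]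
          rintro (rfl | h)
          · exact hxN hyN
          · exact hyB h
        · have hcov' : IsVertexCover (deleteVerts G {x}) (insert y (B (idx p))) :=
            isVertexCover_mono (Finset.subset_insert _ _) (hBmin (idx p)).1
          obtain ⟨D, hD, hDmin⟩ := exists_minCover_subset _ _ (sdiff_cover G x hcov')
          obtain ⟨m, hm⟩ := (hAenum D).mp hDmin
          refine ⟨Sum.inl m, Sum.Lex.inl_lt_inr _ _, ?_⟩
          rw [hCCdef, CCfam_inl, CCfam_inr]
          intro w hw
          rcases Finset.mem_union.mp hw with h | h
          · by_cases hwB : w ∈ B (idx p)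
            · exact Finset.mem_insert_of_mem (Finset.mem_insert_of_mem hwB)
            · have hwy : w = y := hsing w (Finset.mem_sdiff.mpr ⟨h, hwB⟩)
                y (Finset.mem_sdiff.mpr ⟨hyN, hyB⟩)
              rw [hwy]; exact Finset.mem_insert_self _ _
          · rw [← hm] at hD
            rcases Finset.mem_insert.mp (Finset.mem_sdiff.mp (hD h)).1 with h2 | h2
            · rw [h2]; exact Finset.mem_insert_self _ _
            · exact Finset.mem_insert_of_mem (Finset.mem_insert_of_mem h2)
      · have hqp : q < p := Sum.Lex.inr_lt_inr_iff.mp hl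
        obtain ⟨v, hvq, hvp, lB, hlB, hsubB⟩ := hGoodB (idx p) (idx q) (hidx hqp)
        have hvx : v ≠ x := by rintro rfl; exact hBx (idx q) hvq
        refine ⟨v, ?_, ?_, ?_⟩
        · rw [hCCdef, CCfam_inr]
          exact Finset.mem_insert_of_mem hvq
        · rw [hCCdef, CCfam_inr, Finset.mem_insert]
          rintro (h | h)
          · exact hvx h
          · exact hvp h
        · by_cases hNl : G.neighborFinset x ⊆ B lB
          · obtain ⟨D, hD, hDmin⟩ := exists_minCover_subset _ _ (sdiff_cover G x (hBmin lB).1)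
            obtain ⟨m, hm⟩ := (hAenum D).mp hDmin
            refine ⟨Sum.inl m, Sum.Lex.inl_lt_inr _ _, ?_⟩
            rw [hCCdef, CCfam_inl, CCfam_inr]
            intro w hw
            have hwBl : w ∈ B lB := by
              rcases Finset.mem_union.mp hw with h | h
              · exact hNl h
              · rw [← hm] at hD
                exact (Finset.mem_sdiff.mp (hD h)).1
            rcases Finset.mem_insert.mp (hsubB hwBl) with h2 | h2
            · rw [h2]; exact Finset.mem_insert_self _ _
            · exact Finset.mem_insert_of_mem (Finset.mem_insert_of_mem h2)
          · obtain ⟨r, hr⟩ := (hidxenum lB).mpr hNl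
            have hrp : r < p := hidx.lt_iff_lt.mp (by rw [hr]; exact hlB)
            refine ⟨Sum.inr r, Sum.Lex.inr_lt_inr_iff.mpr hrp, ?_⟩
            rw [hCCdef, CCfam_inr, CCfam_inr]
            intro w hw
            rcases Finset.mem_insert.mp hw with h | h
            · rw [h]; exact Finset.mem_insert_of_mem (Finset.mem_insert_self _ _)
            · rw [hr] at h
              rcases Finset.mem_insert.mp (hsubB h) with h2 | h2
              · rw [h2]; exact Finset.mem_insert_self _ _
              · exact Finset.mem_insert_of_mem (Finset.mem_insert_of_mem h2)
  constructor
  · rw [hfun, coverIdeal]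
    congr 1
    ext m
    simp only [Set.mem_range, Set.mem_setOf_eq]
    constructor
    · rintro ⟨p, rfl⟩
      exact ⟨CC p, hCCmin p, rfl⟩
    · rintro ⟨C, hC, rfl⟩
      by_cases hxC : x ∈ C
      · obtain ⟨hBm, hNn⟩ := classification_mem G x hC hxC
        obtain ⟨j, hj⟩ := (hBenum (C.erase x)).mp hBm
        obtain ⟨q, hq⟩ := (hidxenum j).mpr (by rw [hj]; exact hNn)
        refine ⟨Sum.inr q, ?_⟩
        rw [hCCdef, CCfam_inr, hq, hj, Finset.insert_erase hxC]
      · obtain ⟨hNC, hmin⟩ := classification_not_mem G x hC hxC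
        obtain ⟨i, hi⟩ := (hAenum (C \ G.neighborFinset x)).mp hmin
        refine ⟨Sum.inl i, ?_⟩
        rw [hCCdef, CCfam_inl, hi, Finset.union_sdiff_of_subset hNC]
  · rw [hfun]
    intro i
    refine ⟨{v | v ∉ CC i ∧ ∃ l ∈ {j : Fin a ⊕ₗ Fin kk | j < i}, CC l ⊆ insert v (CC i)}, ?_⟩
    exact colon_eq {j : Fin a ⊕ₗ Fin kk | j < i} CC (CC i) (hGood i)
end
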